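/- (Convergence of sGS-APG.) Let A : S^n → R^m be a surjective linear map, Z ∈ S^n, b ∈ R^m, and f(W, ξ) = ½‖W + A*ξ + Z‖² − ⟨b, ξ⟩. Assume (W*, ξ*) minimizes f over S^n_+ × R^m. Given W^0 ∈ S^n_+, set W̃^1 = W^0, t_1 = 1, and for k ≥ 1 define: ξ̃^k = (AA*)^{−1}(b − A(Z) − A(W̃^k)), W^k = Π_{S^n_+}(−A*ξ̃^k − Z), ξ^k = (AA*)^{−1}(b − A(Z) − A(W^k)), t_{k+1} = (1 + √(1 + 4 t_k²))/2, and W̃^{k+1} = W^k + ((t_k − 1)/t_{k+1})(W^k − W^{k−1}). Then there exists a constant c ≥ 0 such that for all k ≥ 1: 0 ≤ f(W^k, ξ^k) − f(W*, ξ*) ≤ c/(k+1)². -/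

import Mathlib

set_option autoImplicit false

open Matrix Finset Filter
open scoped RealInnerProductSpace

noncomputable section

/-- The trace inner product `⟨X, Y⟩ = trace (Xᵀ * Y)` on real `n × n` matrices. -/
def mInner {n : ℕ} (X Y : Matrix (Fin n) (Fin n) ℝ) : ℝ := (Xᵀ * Y).trace

/-- The Frobenius norm induced by the trace inner product. -/
def mNorm {n : ℕ} (X : Matrix (Fin n) (Fin n) ℝ) : ℝ := Real.sqrt (mInner X X)

/-- `ℝ^m` with the Euclidean inner product. -/
abbrev Vec (m : ℕ) := EuclideanSpace ℝ (Fin m)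

/-- `P` is the (unique) nearest positive semidefinite matrix to `Z` in the Frobenius norm,
i.e. the projection of `Z` onto the PSD cone. -/
def IsProjPSD {n : ℕ} (Z P : Matrix (Fin n) (Fin n) ℝ) : Prop :=
  P.PosSemidef ∧
    ∀ Y : Matrix (Fin n) (Fin n) ℝ, Y.PosSemidef → mNorm (P - Z) ≤ mNorm (Y - Z)

/-- The objective of the dual projection problem:
`f(W, ξ) = ½ ‖W + A*ξ + Z‖² − ⟨b, ξ⟩`. -/
def fobj {n m : ℕ} (Aadj : Vec m →ₗ[ℝ] Matrix (Fin n) (Fin n) ℝ)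
    (Z : Matrix (Fin n) (Fin n) ℝ) (b : Vec m)
    (W : Matrix (Fin n) (Fin n) ℝ) (ξ : Vec m) : ℝ :=
  (1 / 2) * mNorm (W + Aadj ξ + Z) ^ 2 - ⟪b, ξ⟫

namespace SGS
variable {n : ℕ}
lemma mInner_add_left (X Y Z : Matrix (Fin n) (Fin n) ℝ) :
    mInner (X + Y) Z = mInner X Z + mInner Y Z := by
  simp [mInner, Matrix.transpose_add, Matrix.add_mul]
lemma mInner_sub_left (X Y Z : Matrix (Fin n) (Fin n) ℝ) :
    mInner (X - Y) Z = mInner X Z - mInner Y Z := by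
  simp [mInner, Matrix.transpose_sub, Matrix.sub_mul]
lemma mInner_smul_left (r : ℝ) (X Z : Matrix (Fin n) (Fin n) ℝ) :
    mInner (r • X) Z = r * mInner X Z := by
  simp [mInner, Matrix.transpose_smul, Matrix.smul_mul]
lemma mInner_comm (X Y : Matrix (Fin n) (Fin n) ℝ) : mInner X Y = mInner Y X := by
  rw [mInner, ← Matrix.trace_transpose, Matrix.transpose_mul, Matrix.transpose_transpose, mInner]
lemma mInner_add_right (X Y Z : Matrix (Fin n) (Fin n) ℝ) :
    mInner X (Y + Z) = mInner X Y + mInner X Z := by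
  rw [mInner_comm, mInner_add_left, mInner_comm Y, mInner_comm Z]
lemma mInner_sub_right (X Y Z : Matrix (Fin n) (Fin n) ℝ) :
    mInner X (Y - Z) = mInner X Y - mInner X Z := by
  rw [mInner_comm, mInner_sub_left, mInner_comm Y, mInner_comm Z]
lemma mInner_smul_right (r : ℝ) (X Z : Matrix (Fin n) (Fin n) ℝ) :
    mInner X (r • Z) = r * mInner X Z := by
  rw [mInner_comm, mInner_smul_left, mInner_comm Z]
lemma mInner_self_nonneg (X : Matrix (Fin n) (Fin n) ℝ) : 0 ≤ mInner X X := by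
  simp only [mInner, Matrix.trace, Matrix.diag, Matrix.mul_apply, Matrix.transpose_apply]
  exact Finset.sum_nonneg fun i _ => Finset.sum_nonneg fun j _ => mul_self_nonneg _
lemma mNorm_sq (X : Matrix (Fin n) (Fin n) ℝ) : mNorm X ^ 2 = mInner X X :=
  Real.sq_sqrt (mInner_self_nonneg X)
lemma mNorm_le (X Y : Matrix (Fin n) (Fin n) ℝ) (h : mNorm X ≤ mNorm Y) :
    mInner X X ≤ mInner Y Y := by
  rw [← mNorm_sq, ← mNorm_sq]
  exact pow_le_pow_left₀ (Real.sqrt_nonneg _) h 2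
lemma expand2 (a b : Matrix (Fin n) (Fin n) ℝ) :
    mInner (a - b) (a - b) = mInner a a - 2 * mInner a b + mInner b b := by
  rw [mInner_sub_left, mInner_sub_right, mInner_sub_right, mInner_comm b a]; ring
lemma psd_add {A B : Matrix (Fin n) (Fin n) ℝ} (hA : A.PosSemidef) (hB : B.PosSemidef) :
    (A + B).PosSemidef := by
  refine ⟨hA.1.add hB.1, fun x => ?_⟩
  have := add_le_add (hA.2 x) (hB.2 x)
  simpa [mul_add, add_mul, Finsupp.sum_add] using add_nonneg (hA.2 x) (hB.2 x)
lemma psd_smul {A : Matrix (Fin n) (Fin n) ℝ} (hA : A.PosSemidef) {c : ℝ} (hc : 0 ≤ c) :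
    (c • A).PosSemidef := by
  refine ⟨?_, fun x => ?_⟩
  · unfold Matrix.IsHermitian
    rw [Matrix.conjTranspose_smul, hA.1]
    simp
  · simp only [Matrix.smul_apply, smul_eq_mul, mul_left_comm _ c, mul_assoc c, ← Finsupp.mul_sum]
    exact mul_nonneg hc (hA.2 x)

lemma expand_add (a b : Matrix (Fin n) (Fin n) ℝ) :
    mInner (a + b) (a + b) = mInner a a + 2 * mInner a b + mInner b b := by
  rw [mInner_add_left, mInner_add_right, mInner_add_right, mInner_comm b a]; ring

lemma expand3 (r s : ℝ) (a b c : Matrix (Fin n) (Fin n) ℝ) :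
    mInner (r • a - s • b - c) (r • a - s • b - c) =
      r^2 * mInner a a + s^2 * mInner b b + mInner c c
        - 2*r*s * mInner a b - 2*r * mInner a c + 2*s * mInner b c := by
  simp only [mInner_sub_left, mInner_sub_right, mInner_smul_left, mInner_smul_right]
  rw [mInner_comm b a, mInner_comm c a, mInner_comm c b]; ring

/-- Variational inequality for nearest-point projection onto the PSD cone. -/
lemma proj_vi {proj : Matrix (Fin n) (Fin n) ℝ → Matrix (Fin n) (Fin n) ℝ}
    (hproj : ∀ Y : Matrix (Fin n) (Fin n) ℝ, IsProjPSD Y (proj Y))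
    (G Y : Matrix (Fin n) (Fin n) ℝ) (hY : Y.PosSemidef) :
    mInner (G - proj G) (Y - proj G) ≤ 0 := by
  set P := proj G with hP
  set a : ℝ := mInner (P - G) (Y - P) with ha
  set c : ℝ := mInner (Y - P) (Y - P) with hc
  have hc0 : 0 ≤ c := mInner_self_nonneg _
  have key : ∀ t : ℝ, 0 < t → t ≤ 1 → 0 ≤ 2*t*a + t^2*c := by
    intro t ht0 ht1
    have hpt : (P + t • (Y - P)).PosSemidef := by
      have h1 : ((1-t) • P).PosSemidef := psd_smul (hproj G).1 (by linarith)
      have h2 : (t • Y).PosSemidef := psd_smul hY (le_of_lt ht0)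
      have : P + t • (Y - P) = (1-t) • P + t • Y := by
        rw [smul_sub, sub_smul, one_smul]; abel
      rw [this]; exact psd_add h1 h2
    have h3 := mNorm_le _ _ ((hproj G).2 _ hpt)
    have he : P + t • (Y - P) - G = (P - G) + t • (Y - P) := by abel
    rw [he] at h3
    have hexp : mInner ((P - G) + t • (Y - P)) ((P - G) + t • (Y - P))
        = mInner (P-G) (P-G) + 2*t*a + t^2*c := by
      rw [mInner_add_left, mInner_add_right, mInner_add_right, mInner_smul_left,
        mInner_smul_left, mInner_smul_right, mInner_smul_right, mInner_comm (Y-P) (P-G)]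
      rw [← ha, ← hc]; ring
    rw [hexp] at h3; linarith
  have ha0 : 0 ≤ a := by
    by_contra hlt
    push_neg at hlt
    rcases eq_or_lt_of_le hc0 with hceq | hcpos
    · have := key 1 one_pos le_rfl
      rw [← hceq] at this; nlinarith
    · set t := min 1 (-a/c) with htdef
      have ht0 : 0 < t := lt_min one_pos (div_pos (neg_pos.mpr hlt) hcpos)
      have ht1 : t ≤ 1 := min_le_left _ _
      have htc : t ≤ -a/c := min_le_right _ _
      have := key t ht0 ht1
      have h4 : t^2*c ≤ t*(-a) := by
        have h5 : t*c ≤ -a := by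
          have h6 := mul_le_mul_of_nonneg_right htc (le_of_lt hcpos)
          rwa [div_mul_cancel₀ _ (ne_of_gt hcpos)] at h6
        nlinarith
      nlinarith
  have hz : mInner (G - P) (Y - P) + a = 0 := by
    rw [ha, ← mInner_add_left]
    have h0 : G - P + (P - G) = 0 := by abel
    rw [h0]
    simp [mInner]
  linarith

lemma mInner_zero_right (X : Matrix (Fin n) (Fin n) ℝ) : mInner X 0 = 0 := by simp [mInner]

lemma key_id (x y z : Matrix (Fin n) (Fin n) ℝ) :
    mInner (y-x) (x-z) + 1/2*mInner (x-y) (x-y)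
      = 1/2*mInner (y-z) (y-z) - 1/2*mInner (x-z) (x-z) := by
  simp only [mInner_sub_left, mInner_sub_right]
  linarith [mInner_comm x y, mInner_comm x z, mInner_comm y z]

lemma bt_id (T : ℝ) (x y wk ws : Matrix (Fin n) (Fin n) ℝ) :
    T*(T-1)*(mInner (y-wk) (y-wk) - mInner (x-wk) (x-wk))
      + T*(mInner (y-ws) (y-ws) - mInner (x-ws) (x-ws))
    = mInner (T•y - (T-1)•wk - ws) (T•y - (T-1)•wk - ws)
      - mInner (T•x - (T-1)•wk - ws) (T•x - (T-1)•wk - ws) := by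
  rw [expand3, expand3, expand2 y wk, expand2 x wk, expand2 y ws, expand2 x ws]; ring

section ops
variable {n m : ℕ} (A : Matrix (Fin n) (Fin n) ℝ →ₗ[ℝ] Vec m)
  (Aadj : Vec m →ₗ[ℝ] Matrix (Fin n) (Fin n) ℝ) (B : Vec m →ₗ[ℝ] Vec m)
  (Z : Matrix (Fin n) (Fin n) ℝ) (b : Vec m)

/-- projection onto the kernel of A (when B is the inverse of AA*) -/
def QF (X : Matrix (Fin n) (Fin n) ℝ) : Matrix (Fin n) (Fin n) ℝ := X - Aadj (B (A X))

def uvec : Matrix (Fin n) (Fin n) ℝ := Aadj (B b)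

def hfun (X : Matrix (Fin n) (Fin n) ℝ) : ℝ := fobj Aadj Z b X (B (b - A Z - A X))

def gg (Y : Matrix (Fin n) (Fin n) ℝ) : Matrix (Fin n) (Fin n) ℝ :=
  QF A Aadj B (Y + Z) + uvec Aadj B b

variable (hadj : ∀ (X : Matrix (Fin n) (Fin n) ℝ) (ξ : Vec m), ⟪A X, ξ⟫ = mInner X (Aadj ξ))
  (hB1 : ∀ ξ : Vec m, A (Aadj (B ξ)) = ξ)
include hadj hB1

lemma QF_inner_adj (X : Matrix (Fin n) (Fin n) ℝ) (ξ : Vec m) :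
    mInner (QF A Aadj B X) (Aadj ξ) = 0 := by
  have h1 : A (QF A Aadj B X) = 0 := by simp [QF, map_sub, hB1]
  rw [← hadj, h1, inner_zero_left]

lemma QF_inner_QF (X Y : Matrix (Fin n) (Fin n) ℝ) :
    mInner (QF A Aadj B X) (QF A Aadj B Y) = mInner (QF A Aadj B X) Y := by
  rw [show QF A Aadj B Y = Y - Aadj (B (A Y)) from rfl, mInner_sub_right,
    QF_inner_adj A Aadj B hadj hB1, sub_zero]

lemma QF_contr (D : Matrix (Fin n) (Fin n) ℝ) :
    mInner (QF A Aadj B D) (QF A Aadj B D) ≤ mInner D D := by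
  rw [QF_inner_QF A Aadj B hadj hB1]
  rw [show QF A Aadj B D = D - Aadj (B (A D)) from rfl, mInner_sub_left]
  have h2 : 0 ≤ mInner (Aadj (B (A D))) D := by
    rw [mInner_comm, ← hadj]
    rw [show A D = A (Aadj (B (A D))) from (hB1 (A D)).symm]
    rw [hadj, hB1]
    exact mInner_self_nonneg _
  linarith

lemma binner (S : Matrix (Fin n) (Fin n) ℝ) :
    ⟪b, B (A S)⟫ = mInner S (uvec Aadj B b) := by
  have h1 : ⟪b, B (A S)⟫ = mInner (Aadj (B b)) (Aadj (B (A S))) := by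
    conv_lhs => rw [show b = A (Aadj (B b)) from (hB1 b).symm]
    rw [hadj]
  have h2 : Aadj (B (A S)) = S - QF A Aadj B S := by rw [QF]; abel
  rw [h1, h2, mInner_sub_right, mInner_comm _ (QF A Aadj B S),
    QF_inner_adj A Aadj B hadj hB1, sub_zero,
    show uvec Aadj B b = Aadj (B b) from rfl, mInner_comm]


lemma hfun_eq (X : Matrix (Fin n) (Fin n) ℝ) :
    hfun A Aadj B Z b X
      = 1/2 * mInner (QF A Aadj B (X+Z)) (QF A Aadj B (X+Z))
        + mInner (X+Z) (uvec Aadj B b)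
        + (1/2 * mInner (uvec Aadj B b) (uvec Aadj B b) - ⟪b, B b⟫) := by
  have hr : X + Aadj (B (b - A Z - A X)) + Z = QF A Aadj B (X+Z) + uvec Aadj B b := by
    simp only [QF, uvec, map_sub, map_add]; abel
  rw [show hfun A Aadj B Z b X
    = (1/2) * mNorm (X + Aadj (B (b - A Z - A X)) + Z)^2 - ⟪b, B (b - A Z - A X)⟫ from rfl]
  rw [mNorm_sq, hr]
  have hq : mInner (QF A Aadj B (X+Z) + uvec Aadj B b) (QF A Aadj B (X+Z) + uvec Aadj B b)
      = mInner (QF A Aadj B (X+Z)) (QF A Aadj B (X+Z))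
        + mInner (uvec Aadj B b) (uvec Aadj B b) := by
    rw [mInner_add_left, mInner_add_right, mInner_add_right,
      show uvec Aadj B b = Aadj (B b) from rfl,
      QF_inner_adj A Aadj B hadj hB1, mInner_comm (Aadj (B b)) (QF A Aadj B (X+Z)),
      QF_inner_adj A Aadj B hadj hB1]
    ring
  have hbi : ⟪b, B (b - A Z - A X)⟫ = ⟪b, B b⟫ - mInner (X+Z) (uvec Aadj B b) := by
    rw [map_sub, map_sub, inner_sub_right, inner_sub_right,
      binner A Aadj B b hadj hB1 Z, binner A Aadj B b hadj hB1 X,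
      mInner_add_left]
    ring
  rw [hq, hbi]; ring

lemma hfun_le_fobj (W : Matrix (Fin n) (Fin n) ℝ) (ξ : Vec m) :
    hfun A Aadj B Z b W ≤ fobj Aadj Z b W ξ := by
  set R := QF A Aadj B (W+Z) + uvec Aadj B b with hR
  set δ := ξ - B (b - A Z - A W) with hδ
  have hr : W + Aadj ξ + Z = R + Aadj δ := by
    simp only [hR, hδ, QF, uvec, map_sub, map_add]; abel
  have hr0 : W + Aadj (B (b - A Z - A W)) + Z = R := by
    simp only [hR, QF, uvec, map_sub, map_add]; abel
  have h1 : fobj Aadj Z b W ξ = 1/2 * mInner (R + Aadj δ) (R + Aadj δ) - ⟪b, ξ⟫ := by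
    rw [show fobj Aadj Z b W ξ = (1/2) * mNorm (W + Aadj ξ + Z)^2 - ⟪b, ξ⟫ from rfl,
      mNorm_sq, hr]
  have h0 : hfun A Aadj B Z b W = 1/2 * mInner R R - ⟪b, B (b - A Z - A W)⟫ := by
    rw [show hfun A Aadj B Z b W
      = (1/2) * mNorm (W + Aadj (B (b - A Z - A W)) + Z)^2 - ⟪b, B (b - A Z - A W)⟫ from rfl,
      mNorm_sq, hr0]
  have hRδ : mInner R (Aadj δ) = ⟪b, δ⟫ := by
    rw [hR, mInner_add_left, QF_inner_adj A Aadj B hadj hB1,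
      show uvec Aadj B b = Aadj (B b) from rfl, ← hadj, hB1, zero_add]
  have hexp : mInner (R + Aadj δ) (R + Aadj δ)
      = mInner R R + 2 * ⟪b, δ⟫ + mInner (Aadj δ) (Aadj δ) := by
    rw [expand_add, hRδ]
  have hbξ : ⟪b, ξ⟫ = ⟪b, B (b - A Z - A W)⟫ + ⟪b, δ⟫ := by
    rw [hδ, inner_sub_right]; ring
  have hpos : 0 ≤ mInner (Aadj δ) (Aadj δ) := mInner_self_nonneg _
  rw [h1, h0, hexp, hbξ]; linarith

lemma hfun_diff (X Y : Matrix (Fin n) (Fin n) ℝ) :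
    hfun A Aadj B Z b X - hfun A Aadj B Z b Y
      = mInner (gg A Aadj B Z b Y) (X - Y)
        + 1/2 * mInner (QF A Aadj B (X-Y)) (QF A Aadj B (X-Y)) := by
  rw [hfun_eq A Aadj B Z b hadj hB1 X, hfun_eq A Aadj B Z b hadj hB1 Y]
  have hsplit : QF A Aadj B (X+Z) = QF A Aadj B (Y+Z) + QF A Aadj B (X-Y) := by
    simp only [QF, map_add, map_sub]; abel
  have hexp : mInner (QF A Aadj B (X+Z)) (QF A Aadj B (X+Z))
      = mInner (QF A Aadj B (Y+Z)) (QF A Aadj B (Y+Z))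
        + 2 * mInner (QF A Aadj B (Y+Z)) (X - Y)
        + mInner (QF A Aadj B (X-Y)) (QF A Aadj B (X-Y)) := by
    rw [hsplit, mInner_add_left, mInner_add_right, mInner_add_right,
      mInner_comm (QF A Aadj B (X-Y)) (QF A Aadj B (Y+Z)),
      QF_inner_QF A Aadj B hadj hB1 (Y+Z) (X-Y)]
    ring
  have hu : mInner (X+Z) (uvec Aadj B b) - mInner (Y+Z) (uvec Aadj B b)
      = mInner (X-Y) (uvec Aadj B b) := by
    rw [← mInner_sub_left]; congr 1; abel
  have hgg : mInner (gg A Aadj B Z b Y) (X-Y)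
      = mInner (QF A Aadj B (Y+Z)) (X-Y) + mInner (X-Y) (uvec Aadj B b) := by
    rw [show gg A Aadj B Z b Y = QF A Aadj B (Y+Z) + uvec Aadj B b from rfl,
      mInner_add_left, mInner_comm (uvec Aadj B b)]
  linarith [hexp, hu, hgg]

lemma key_step {proj : Matrix (Fin n) (Fin n) ℝ → Matrix (Fin n) (Fin n) ℝ}
    (hproj : ∀ Y : Matrix (Fin n) (Fin n) ℝ, IsProjPSD Y (proj Y))
    (y z : Matrix (Fin n) (Fin n) ℝ) (hz : z.PosSemidef) :
    hfun A Aadj B Z b (proj (y - gg A Aadj B Z b y)) - hfun A Aadj B Z b z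
      ≤ 1/2 * mInner (y - z) (y - z)
        - 1/2 * mInner (proj (y - gg A Aadj B Z b y) - z) (proj (y - gg A Aadj B Z b y) - z) := by
  set G := gg A Aadj B Z b y with hG
  set x := proj (y - G) with hx
  have vi := proj_vi hproj (y - G) z hz
  have d1 := hfun_diff A Aadj B Z b hadj hB1 x y
  have d2 := hfun_diff A Aadj B Z b hadj hB1 z y
  have c1 : mInner (QF A Aadj B (x-y)) (QF A Aadj B (x-y)) ≤ mInner (x-y) (x-y) :=
    QF_contr A Aadj B hadj hB1 _
  have c2 : 0 ≤ mInner (QF A Aadj B (z-y)) (QF A Aadj B (z-y)) := mInner_self_nonneg _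
  have lin1 : mInner G (x-y) - mInner G (z-y) = mInner G (x-z) := by
    rw [← mInner_sub_right]; congr 1; abel
  have e1 : mInner ((y - G) - x) (z - x) = mInner (y-x) (z-x) - mInner G (z-x) := by
    rw [← mInner_sub_left]; congr 1; abel
  have e2 : mInner G (x-z) + mInner G (z-x) = 0 := by
    rw [← mInner_add_right, show (x-z)+(z-x) = 0 by abel, mInner_zero_right]
  have e3 : mInner (y-x) (x-z) + mInner (y-x) (z-x) = 0 := by
    rw [← mInner_add_right, show (x-z)+(z-x) = 0 by abel, mInner_zero_right]
  have id1 := key_id x y z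
  linarith [vi, d1, d2, c1, c2, lin1, e1, e2, e3, id1]

end ops
end SGS

open SGS

/-- `O(1/k²)` convergence of the sGS-based accelerated proximal gradient
method (Theorem `converg-thm-sgs-apg` in the paper). -/
theorem sGS_APG_convergence {n m : ℕ}
    (A : Matrix (Fin n) (Fin n) ℝ →ₗ[ℝ] Vec m)
    (Aadj : Vec m →ₗ[ℝ] Matrix (Fin n) (Fin n) ℝ)
    (hadj : ∀ (X : Matrix (Fin n) (Fin n) ℝ) (ξ : Vec m), ⟪A X, ξ⟫ = mInner X (Aadj ξ))
    (hAadjSymm : ∀ ξ : Vec m, (Aadj ξ).IsSymm)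
    (hsurj : Function.Surjective ⇑A)
    -- `B` is the inverse of `A A*`
    (B : Vec m →ₗ[ℝ] Vec m)
    (hB1 : ∀ ξ : Vec m, A (Aadj (B ξ)) = ξ)
    (hB2 : ∀ ξ : Vec m, B (A (Aadj ξ)) = ξ)
    -- the projection onto the PSD cone
    (proj : Matrix (Fin n) (Fin n) ℝ → Matrix (Fin n) (Fin n) ℝ)
    (hproj : ∀ Y : Matrix (Fin n) (Fin n) ℝ, IsProjPSD Y (proj Y))
    (Z : Matrix (Fin n) (Fin n) ℝ) (hZ : Z.IsSymm) (b : Vec m)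
    -- a minimizer of f over S^n_+ × ℝ^m
    (Wstar : Matrix (Fin n) (Fin n) ℝ) (ξstar : Vec m)
    (hWstar : Wstar.PosSemidef)
    (hmin : ∀ (W' : Matrix (Fin n) (Fin n) ℝ) (ξ' : Vec m), W'.PosSemidef →
      fobj Aadj Z b Wstar ξstar ≤ fobj Aadj Z b W' ξ')
    -- the sGS-APG iterates
    (W Wt : ℕ → Matrix (Fin n) (Fin n) ℝ) (ξt ξ : ℕ → Vec m) (t : ℕ → ℝ)
    (hW0 : (W 0).PosSemidef)
    (hWt1 : Wt 1 = W 0) (ht1 : t 1 = 1)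
    (hξt : ∀ k, 1 ≤ k → ξt k = B (b - A Z - A (Wt k)))
    (hWk : ∀ k, 1 ≤ k → W k = proj (-(Aadj (ξt k)) - Z))
    (hξ : ∀ k, 1 ≤ k → ξ k = B (b - A Z - A (W k)))
    (ht : ∀ k, 1 ≤ k → t (k + 1) = (1 + Real.sqrt (1 + 4 * t k ^ 2)) / 2)
    (hWtrec : ∀ k, 1 ≤ k →
      Wt (k + 1) = W k + ((t k - 1) / t (k + 1)) • (W k - W (k - 1))) :
    ∃ c : ℝ, 0 ≤ c ∧ ∀ k, 1 ≤ k →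
      0 ≤ fobj Aadj Z b (W k) (ξ k) - fobj Aadj Z b Wstar ξstar ∧
      fobj Aadj Z b (W k) (ξ k) - fobj Aadj Z b Wstar ξstar ≤ c / ((k : ℝ) + 1) ^ 2 := by
    -- PSD of iterates
  have hpsdW : ∀ k, (W k).PosSemidef := by
    intro k
    rcases Nat.eq_zero_or_pos k with h | h
    · rw [h]; exact hW0
    · rw [hWk k h]; exact (hproj _).1
  -- step characterization : W k is the prox-gradient step from Wt k
  have hstep : ∀ k, 1 ≤ k → W k = proj (Wt k - gg A Aadj B Z b (Wt k)) := by
    intro k hk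
    rw [hWk k hk, hξt k hk]
    congr 1
    simp only [gg, QF, uvec, map_sub, map_add]
    abel
  -- the key one-step estimate
  have hkey : ∀ k, 1 ≤ k → ∀ z : Matrix (Fin n) (Fin n) ℝ, z.PosSemidef →
      hfun A Aadj B Z b (W k) - hfun A Aadj B Z b z
        ≤ 1/2 * mInner (Wt k - z) (Wt k - z) - 1/2 * mInner (W k - z) (W k - z) := by
    intro k hk z hz
    have h := key_step A Aadj B Z b hadj hB1 hproj (Wt k) z hz
    rw [← hstep k hk] at h
    exact h
  -- t-sequence lower bound
  have htpos : ∀ k : ℕ, 1 ≤ k → ((k : ℝ) + 1)/2 ≤ t k := by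
    intro k hk
    induction k, hk using Nat.le_induction with
    | base => rw [ht1]; norm_num
    | succ k hk ih =>
      rw [ht k hk]
      have h1 : (1 : ℝ) ≤ (k : ℝ) := by exact_mod_cast hk
      have h2 : (0 : ℝ) ≤ t k := by linarith
      have h3 : 2 * t k ≤ Real.sqrt (1 + 4 * t k ^ 2) :=
        Real.le_sqrt_of_sq_le (by nlinarith)
      push_cast
      linarith
  have htone : ∀ k, 1 ≤ k → 1 ≤ t k := by
    intro k hk
    have h1 : (1 : ℝ) ≤ (k : ℝ) := by exact_mod_cast hk
    have := htpos k hk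
    linarith
  have htrec : ∀ k, 1 ≤ k → t (k+1)^2 - t (k+1) = t k ^ 2 := by
    intro k hk
    rw [ht k hk]
    have h0 : (0 : ℝ) ≤ 1 + 4 * t k ^ 2 := by positivity
    have hs := Real.sq_sqrt h0
    nlinarith [hs]
  -- the FISTA invariant
  set E : ℝ := 1/2 * mInner (W 0 - Wstar) (W 0 - Wstar) with hE
  have inv : ∀ k, 1 ≤ k →
      t k ^ 2 * (hfun A Aadj B Z b (W k) - hfun A Aadj B Z b Wstar)
        + 1/2 * mInner (t k • W k - (t k - 1) • W (k-1) - Wstar)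
            (t k • W k - (t k - 1) • W (k-1) - Wstar) ≤ E := by
    intro k hk
    induction k, hk using Nat.le_induction with
    | base =>
      have hb := hkey 1 le_rfl Wstar hWstar
      rw [hWt1] at hb
      rw [ht1]
      have hu1 : (1:ℝ) • W 1 - ((1:ℝ) - 1) • W (1-1) - Wstar = W 1 - Wstar := by
        rw [one_smul, sub_self, zero_smul, sub_zero]
      rw [hu1, one_pow, one_mul]
      rw [hE]
      linarith [hb]
    | succ k hk ih =>
      have hk1 : 1 ≤ k + 1 := by omega
      have hT1 : 1 ≤ t (k+1) := htone (k+1) hk1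
      have hτ1 : 1 ≤ t k := htone k hk
      have hrec := htrec k hk
      have i1 := hkey (k+1) hk1 (W k) (hpsdW k)
      have i2 := hkey (k+1) hk1 Wstar hWstar
      -- the momentum identity
      have hTy : t (k+1) • Wt (k+1) - (t (k+1) - 1) • W k - Wstar
          = t k • W k - (t k - 1) • W (k-1) - Wstar := by
        rw [hWtrec k hk, smul_add, smul_smul,
          mul_div_cancel₀ _ (by linarith : t (k+1) ≠ 0)]
        module
      have bt := bt_id (t (k+1)) (W (k+1)) (Wt (k+1)) (W k) Wstar
      rw [hTy] at bt
      have j1 : t (k+1) * (t (k+1) - 1) * (hfun A Aadj B Z b (W (k+1)) - hfun A Aadj B Z b (W k))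
          ≤ t (k+1) * (t (k+1) - 1) * (1/2 * mInner (Wt (k+1) - W k) (Wt (k+1) - W k)
              - 1/2 * mInner (W (k+1) - W k) (W (k+1) - W k)) :=
        mul_le_mul_of_nonneg_left i1 (by nlinarith)
      have j2 : t (k+1) * (hfun A Aadj B Z b (W (k+1)) - hfun A Aadj B Z b Wstar)
          ≤ t (k+1) * (1/2 * mInner (Wt (k+1) - Wstar) (Wt (k+1) - Wstar)
              - 1/2 * mInner (W (k+1) - Wstar) (W (k+1) - Wstar)) :=
        mul_le_mul_of_nonneg_left i2 (by linarith)
      have e1 : (t (k+1)^2 - t (k+1)) * hfun A Aadj B Z b (W k)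
          = t k ^2 * hfun A Aadj B Z b (W k) := by rw [hrec]
      have e2 : (t (k+1)^2 - t (k+1)) * hfun A Aadj B Z b Wstar
          = t k ^2 * hfun A Aadj B Z b Wstar := by rw [hrec]
      have hidx : k + 1 - 1 = k := by omega
      rw [hidx]
      linarith [j1, j2, bt, ih, e1, e2]
  -- conclusion
  have hE0 : 0 ≤ E := by
    rw [hE]; linarith [mInner_self_nonneg (W 0 - Wstar)]
  refine ⟨4 * E, by linarith, ?_⟩
  intro k hk
  have hfk : fobj Aadj Z b (W k) (ξ k) = hfun A Aadj B Z b (W k) := by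
    rw [hξ k hk]; rfl
  have hstar : hfun A Aadj B Z b Wstar ≤ fobj Aadj Z b Wstar ξstar :=
    hfun_le_fobj A Aadj B Z b hadj hB1 Wstar ξstar
  have hlow : fobj Aadj Z b Wstar ξstar ≤ fobj Aadj Z b (W k) (ξ k) :=
    hmin (W k) (ξ k) (hpsdW k)
  refine ⟨by linarith, ?_⟩
  have hiv := inv k hk
  have humin := mInner_self_nonneg (t k • W k - (t k - 1) • W (k-1) - Wstar)
  have ht2 := htpos k hk
  have hk1 : (1 : ℝ) ≤ (k : ℝ) := by exact_mod_cast hk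
  have hvpos : 0 ≤ hfun A Aadj B Z b (W k) - hfun A Aadj B Z b Wstar := by
    rw [← hfk]; linarith
  have hkpos : (0 : ℝ) < ((k : ℝ) + 1)^2 := by positivity
  have h0t : (0:ℝ) ≤ ((k:ℝ)+1)/2 := by linarith
  have hsq : ((k:ℝ)+1)/2 * (((k:ℝ)+1)/2) ≤ t k * t k :=
    mul_le_mul ht2 ht2 h0t (by linarith)
  have hv4 : ((k:ℝ)+1)^2/4 * (hfun A Aadj B Z b (W k) - hfun A Aadj B Z b Wstar) ≤ E := by
    nlinarith [hiv, humin, hvpos, hsq]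
  have hfin : hfun A Aadj B Z b (W k) - hfun A Aadj B Z b Wstar ≤ 4 * E / ((k:ℝ)+1)^2 := by
    rw [le_div_iff₀ hkpos]
    nlinarith [hv4]
  linarith [hfin, hstar, hfk.le, hfk.ge]
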